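/- Consider the B-HSVM objective F(u) = f(u) + g(u) on ℝ^{p+1}, u = (b, w), where f(b, w) = (1/n) Σ_i φ_H(y_i(b + x_iᵀw)) and g(b, w) = λ₁‖w‖₁ + (λ₂/2)‖w‖² + (λ₃/2)b² with λ₁ ≥ 0 and λ₂, λ₃ > 0. Then g is strongly convex with modulus min(λ₂, λ₃), F has a unique minimizer u*, and any sequence {u^k} satisfying for all k ≥ 1: u^k minimizes Q(u, û^{k−1}) = f(û^{k−1}) + ⟨∇f(û^{k−1}), u − û^{k−1}⟩ + (L_k/2)‖u − û^{k−1}‖² + g(u) with û^{k−1} = u^{k−1} + ω_{k−1}(u^{k−1} − u^{k−2}), 0 ≤ ω_{k−1} ≤ √(L_{k−1}/L_k), 0 < L_k ≤ L_f, the descent condition f(u^k) ≤ f(û^{k−1}) + ⟨∇f(û^{k−1}), u^k − û^{k−1}⟩ + (L_k/2)‖u^k − û^{k−1}‖², and F(u^k) ≤ F(u^{k−1}), converges R-linearly to u*: there exist C > 0 and 0 < τ < 1 with ‖u^k − u*‖ ≤ C τ^k for all k. -/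

import Mathlib

open scoped RealInnerProductSpace

/-- The huberized hinge loss. -/
noncomputable def phiH (δ t : ℝ) : ℝ :=
  if 1 < t then 0 else if 1 - δ < t then (1 - t) ^ 2 / (2 * δ) else 1 - t - δ / 2

/-- The subdifferential of `h` at `v`: the set of (global) subgradients. -/
def SubderivAt {m : ℕ} (h : EuclideanSpace ℝ (Fin m) → ℝ)
    (v : EuclideanSpace ℝ (Fin m)) : Set (EuclideanSpace ℝ (Fin m)) :=
  {g | ∀ z, h z ≥ h v + ⟪g, z - v⟫}

open Set Filter Topology

section Aux

variable {E : Type*} [NormedAddCommGroup E] [InnerProductSpace ℝ E]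

lemma aux_combo_norm_sq (a b : E) (t : ℝ) :
    ‖(1-t)•a + t•b‖^2 = (1-t)*‖a‖^2 + t*‖b‖^2 - t*(1-t)*‖a-b‖^2 := by
  have h1 : ‖(1-t)•a + t•b‖^2 = ‖(1-t)•a‖^2 + 2*⟪(1-t)•a, t•b⟫ + ‖t•b‖^2 := by
    rw [← real_inner_self_eq_norm_sq, real_inner_add_add_self,
      real_inner_self_eq_norm_sq, real_inner_self_eq_norm_sq]
  have h2 : ‖a-b‖^2 = ‖a‖^2 - 2*⟪a,b⟫ + ‖b‖^2 := norm_sub_sq_real a b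
  have h3 : ⟪(1-t)•a, t•b⟫ = (1-t)*(t*⟪a,b⟫) := by
    rw [real_inner_smul_left, real_inner_smul_right]
  have h4 : ‖(1-t)•a‖^2 = (1-t)^2*‖a‖^2 := by
    rw [norm_smul, mul_pow, Real.norm_eq_abs, sq_abs]
  have h5 : ‖t•b‖^2 = t^2*‖b‖^2 := by
    rw [norm_smul, mul_pow, Real.norm_eq_abs, sq_abs]
  rw [h1, h3, h4, h5]; nlinarith [h2]

lemma aux_le_of_small (a b K : ℝ) (hK : 0 ≤ K) (h : ∀ t:ℝ, 0<t → t<1 → a ≤ b + t*K) : a ≤ b := by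
  by_contra hc
  push_neg at hc
  have hK0 : 0 < K := by
    rcases hK.lt_or_eq with h'|h'
    · exact h'
    · have := h (1/2) (by norm_num) (by norm_num); rw [← h'] at this; linarith
  set t := min (1/2) ((a-b)/(2*K)) with ht
  have ht0 : 0 < t := lt_min (by norm_num) (div_pos (by linarith) (by linarith))
  have ht1 : t < 1 := lt_of_le_of_lt (min_le_left _ _) (by norm_num)
  have := h t ht0 ht1
  have h2 : t*K ≤ (a-b)/2 := by
    calc t*K ≤ ((a-b)/(2*K))*K := by
          apply mul_le_mul_of_nonneg_right (min_le_right _ _) hK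
      _ = (a-b)/2 := by field_simp
  linarith

lemma aux_strong_combo (c : E → ℝ) (hc : ConvexOn ℝ Set.univ c) (ν : ℝ) (hν : 0 ≤ ν)
    (φ : E → ℝ) (hφ : ∀ z, φ z = c z + ν/2*‖z‖^2) (a b : E) (t : ℝ) (ht0 : 0 ≤ t) (ht1 : t ≤ 1) :
    φ ((1-t)•a + t•b) ≤ (1-t)*φ a + t*φ b - ν*t*(1-t)/2*‖a-b‖^2 := by
  have hcc := hc.2 (mem_univ a) (mem_univ b) (by linarith : (0:ℝ) ≤ 1-t) ht0 (by ring)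
  simp only [smul_eq_mul] at hcc
  have hn := aux_combo_norm_sq a b t
  rw [hφ, hφ, hφ, hn]
  nlinarith [hcc]

lemma aux_min_strong (c : E → ℝ) (hc : ConvexOn ℝ Set.univ c) (ν : ℝ) (hν : 0 ≤ ν)
    (φ : E → ℝ) (hφ : ∀ z, φ z = c z + ν/2*‖z‖^2) (x₀ : E) (hmin : ∀ v, φ x₀ ≤ φ v) (v : E) :
    φ x₀ + ν/2*‖v-x₀‖^2 ≤ φ v := by
  have key : ∀ t:ℝ, 0 < t → t < 1 → φ x₀ + ν/2*‖v-x₀‖^2 ≤ φ v + t*(ν/2*‖x₀-v‖^2) := by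
    intro t ht0 ht1
    have h1 := aux_strong_combo c hc ν hν φ hφ x₀ v t ht0.le ht1.le
    have h2 := hmin ((1-t)•x₀ + t•v)
    have h3 : ‖v - x₀‖^2 = ‖x₀ - v‖^2 := by rw [← norm_neg]; congr 1; abel
    rw [h3]
    nlinarith [sq_nonneg ‖x₀ - v‖]
  exact aux_le_of_small (φ x₀ + ν/2*‖v-x₀‖^2) (φ v) (ν/2*‖x₀-v‖^2) (by positivity) key

lemma aux_subgrad_strong (c : E → ℝ) (hc : ConvexOn ℝ Set.univ c) (ν : ℝ) (hν : 0 ≤ ν)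
    (g : E → ℝ) (hφ : ∀ z, g z = c z + ν/2*‖z‖^2) (v gv : E)
    (hgv : ∀ z, g z ≥ g v + ⟪gv, z - v⟫) (u' : E) :
    g u' - g v ≥ ⟪gv, u' - v⟫ + ν/2*‖u'-v‖^2 := by
  have key : ∀ t:ℝ, 0 < t → t < 1 →
      ⟪gv, u' - v⟫ + ν/2*‖u'-v‖^2 ≤ (g u' - g v) + t*(ν/2*‖v-u'‖^2) := by
    intro t ht0 ht1
    have h1 := aux_strong_combo c hc ν hν g hφ v u' t ht0.le ht1.le
    have h2 := hgv ((1-t)•v + t•u')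
    have h3 : (1-t)•v + t•u' - v = t•(u'-v) := by
      rw [smul_sub]; module
    have h4 : ⟪gv, (1-t)•v + t•u' - v⟫ = t*⟪gv, u'-v⟫ := by
      rw [h3, real_inner_smul_right]
    have h5 : ‖u' - v‖^2 = ‖v - u'‖^2 := by rw [← norm_neg]; congr 1; abel
    rw [h5]
    nlinarith [h2, sq_nonneg ‖v - u'‖]
  exact aux_le_of_small _ _ _ (by positivity) key

lemma aux_affine_convex (w : E) (K : ℝ) : ConvexOn ℝ Set.univ (fun z : E => ⟪w, z⟫ + K) := by
  refine ⟨convex_univ, ?_⟩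
  intro a _ b _ s r hs hr hsr
  apply le_of_eq
  simp only [smul_eq_mul, inner_add_right, real_inner_smul_right]
  linear_combination (-K) * hsr

lemma aux_convexOn_sum {ι : Type*} (s : Finset ι) (c : ι → E → ℝ)
    (h : ∀ i ∈ s, ConvexOn ℝ Set.univ (c i)) :
    ConvexOn ℝ Set.univ (fun u => ∑ i ∈ s, c i u) := by
  classical
  induction s using Finset.induction with
  | empty => simpa using convexOn_const (0:ℝ) convex_univ
  | @insert a s hnot ih =>
    have h1 : ConvexOn ℝ Set.univ (fun u => c a u + ∑ i ∈ s, c i u) :=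
      (h a (Finset.mem_insert_self a s)).add (ih fun i hi => h i (Finset.mem_insert_of_mem hi))
    have h2 : (fun u => ∑ i ∈ insert a s, c i u) = fun u => c a u + ∑ i ∈ s, c i u :=
      funext fun u => Finset.sum_insert hnot
    rw [h2]; exact h1

end Aux

section GradAux

variable {E : Type*} [NormedAddCommGroup E] [InnerProductSpace ℝ E] [CompleteSpace E]

lemma aux_grad_convex_ineq (f : E → ℝ) (hf : ConvexOn ℝ Set.univ f) (x z gr : E)
    (h : HasGradientAt f gr x) : f x + ⟪gr, z - x⟫ ≤ f z := by
  set q : ℝ → ℝ := fun t => f (x + t • (z - x)) with hq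
  have hline : HasDerivAt (fun t : ℝ => x + t • (z - x)) (z - x) 0 := by
    simpa using (hasDerivAt_id (0:ℝ)).smul_const (z - x) |>.const_add x
  have hfd : HasFDerivAt f (InnerProductSpace.toDual ℝ E gr) x := h.hasFDerivAt
  have hfd' : HasFDerivAt f (InnerProductSpace.toDual ℝ E gr)
      ((fun t : ℝ => x + t • (z - x)) 0) := by
    simpa using hfd
  have hqd : HasDerivAt q ⟪gr, z - x⟫ 0 := by
    have h' : HasDerivAt (f ∘ fun t : ℝ => x + t • (z - x)) ⟪gr, z - x⟫ 0 := by
      simpa using hfd'.comp_hasDerivAt 0 hline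
    exact h'
  have hslope : Tendsto (slope q 0) (𝓝[>] 0) (𝓝 ⟪gr, z - x⟫) :=
    (hasDerivAt_iff_tendsto_slope.1 hqd).mono_left
      (nhdsWithin_mono 0 (fun t ht => ne_of_gt ht))
  have hev : ∀ᶠ t in 𝓝[>] (0:ℝ), slope q 0 t ≤ f z - f x := by
    filter_upwards [Ioo_mem_nhdsGT one_pos] with t ht
    have ht0 : 0 < t := ht.1
    have ht1 : t < 1 := ht.2
    have hcomb : x + t • (z - x) = (1 - t) • x + t • z := by
      rw [smul_sub]; module
    have hcv := hf.2 (mem_univ x) (mem_univ z) (by linarith : (0:ℝ) ≤ 1 - t) ht0.le (by ring)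
    simp only [smul_eq_mul] at hcv
    have hqt : q t ≤ (1 - t) * f x + t * f z := by rw [hq]; simpa [hcomb] using hcv
    have hq0 : q 0 = f x := by simp [hq]
    rw [slope_def_field, sub_zero, div_le_iff₀ ht0]
    nlinarith [hqt]
  have := le_of_tendsto hslope hev
  linarith

end GradAux

section PhiH

lemma phiH_eq {δ : ℝ} (hδ : 0 < δ) (t : ℝ) :
    phiH δ t = δ/2*((max ((1-t)/δ) 0)^2 - (max ((1-t)/δ-1) 0)^2) := by
  unfold phiH
  rcases lt_or_ge 1 t with h1 | h1
  · rw [if_pos h1]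
    have r0 : (1-t)/δ ≤ 0 := div_nonpos_of_nonpos_of_nonneg (by linarith) hδ.le
    rw [max_eq_right r0, max_eq_right (by linarith)]
    ring
  · rcases le_or_gt t (1-δ) with h2 | h2
    · rw [if_neg (by linarith), if_neg (by linarith)]
      have hr : (1:ℝ) ≤ (1-t)/δ := (one_le_div hδ).2 (by linarith)
      rw [max_eq_left (by linarith), max_eq_left (by linarith)]
      field_simp
      ring
    · rw [if_neg (by linarith), if_pos h2]
      have r0 : 0 ≤ (1-t)/δ := div_nonneg (by linarith) hδ.le
      have r1 : (1-t)/δ - 1 ≤ 0 := by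
        rw [sub_nonpos, div_le_one hδ]; linarith
      rw [max_eq_left r0, max_eq_right r1]
      field_simp
      ring

lemma phiH_nonneg {δ : ℝ} (hδ : 0 < δ) (t : ℝ) : 0 ≤ phiH δ t := by
  unfold phiH
  split_ifs with h1 h2
  · exact le_refl 0
  · positivity
  · push_neg at h1 h2; linarith

lemma sq_max_hasDeriv (r : ℝ) : HasDerivAt (fun s => max s 0 ^ 2) (2 * max r 0) r := by
  rcases lt_trichotomy r 0 with h | h | h
  · have hev : (fun _ : ℝ => (0:ℝ)) =ᶠ[𝓝 r] (fun s => max s 0 ^ 2) := by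
      filter_upwards [Iio_mem_nhds h] with s hs
      rw [max_eq_right (le_of_lt hs)]; ring
    rw [max_eq_right h.le, mul_zero]
    exact (hasDerivAt_const r (0:ℝ)).congr_of_eventuallyEq hev.symm
  · subst h
    rw [max_self, mul_zero]
    rw [hasDerivAt_iff_isLittleO, Asymptotics.isLittleO_iff]
    intro c hc
    filter_upwards [Metric.ball_mem_nhds (0:ℝ) hc] with s hs
    rw [Real.ball_eq_Ioo] at hs
    have h2 : |s| ≤ c := by
      rw [abs_le]; constructor
      · linarith [hs.1]
      · linarith [hs.2]
    have key : max s 0 ^ 2 ≤ c * |s| := by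
      rcases le_total s 0 with h' | h'
      · rw [max_eq_right h']
        have : 0 ≤ c * |s| := mul_nonneg (le_of_lt hc) (abs_nonneg s)
        simpa using this
      · rw [max_eq_left h', abs_of_nonneg h'] at *
        nlinarith [abs_nonneg s]
    have h0 : max (0:ℝ) 0 = 0 := max_self 0
    simp only [h0, smul_eq_mul, mul_zero, sub_zero, ne_eq, zero_pow, OfNat.ofNat_ne_zero,
      not_false_eq_true]
    rw [Real.norm_eq_abs, Real.norm_eq_abs, abs_of_nonneg (sq_nonneg _)]
    simpa using key
  · have hev : (fun s : ℝ => s ^ 2) =ᶠ[𝓝 r] (fun s => max s 0 ^ 2) := by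
      filter_upwards [Ioi_mem_nhds h] with s hs
      rw [max_eq_left (le_of_lt hs)]
    have h2 : HasDerivAt (fun s : ℝ => s ^ 2) (2 * r) r := by
      simpa using hasDerivAt_pow 2 r
    rw [max_eq_left h.le]
    exact h2.congr_of_eventuallyEq hev.symm

lemma clamp_eq (r : ℝ) : max r 0 - max (r-1) 0 = min (max r 0) 1 := by
  rcases le_total r 0 with h | h
  · rw [max_eq_right h, max_eq_right (by linarith), min_eq_left (by linarith)]
    ring
  · rcases le_total r 1 with h' | h'
    · rw [max_eq_left h, max_eq_right (by linarith), min_eq_left (by linarith)]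
      ring
    · rw [max_eq_left h, max_eq_left (by linarith), min_eq_right (by linarith)]
      ring

lemma phiH_hasDeriv {δ : ℝ} (hδ : 0 < δ) (t : ℝ) :
    HasDerivAt (phiH δ) (-(min (max ((1-t)/δ) 0) 1)) t := by
  have hinner : HasDerivAt (fun s : ℝ => (1-s)/δ) (-1/δ) t := by
    have : HasDerivAt (fun s : ℝ => 1-s) (-1) t := by
      simpa using (hasDerivAt_id t).const_sub 1
    exact this.div_const δ
  have hinner2 : HasDerivAt (fun s : ℝ => (1-s)/δ - 1) (-1/δ) t := hinner.sub_const 1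
  have hc1 : HasDerivAt (fun s : ℝ => max ((1-s)/δ) 0 ^ 2)
      (2 * max ((1-t)/δ) 0 * (-1/δ)) t :=
    by have h' := (sq_max_hasDeriv ((1-t)/δ)).comp t hinner; exact h'
  have hc2 : HasDerivAt (fun s : ℝ => max ((1-s)/δ - 1) 0 ^ 2)
      (2 * max ((1-t)/δ - 1) 0 * (-1/δ)) t :=
    by have h' := (sq_max_hasDeriv ((1-t)/δ - 1)).comp t hinner2; exact h'
  have hsum := (hc1.sub hc2).const_mul (δ/2)
  have heq : phiH δ = fun s => δ/2 * (max ((1-s)/δ) 0 ^ 2 - max ((1-s)/δ - 1) 0 ^ 2) :=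
    funext (phiH_eq hδ)
  rw [heq]
  refine hsum.congr_deriv ?_
  rw [← clamp_eq]
  field_simp
  ring

lemma phiH_deriv_mono {δ : ℝ} (hδ : 0 < δ) :
    Monotone (fun t => -(min (max ((1-t)/δ) 0) 1)) := by
  intro t1 t2 h
  simp only [neg_le_neg_iff]
  apply min_le_min _ le_rfl
  apply max_le_max _ le_rfl
  gcongr

lemma phiH_convex {δ : ℝ} (hδ : 0 < δ) : ConvexOn ℝ Set.univ (phiH δ) := by
  have hdiff : Differentiable ℝ (phiH δ) := fun t => (phiH_hasDeriv hδ t).differentiableAt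
  have hmono : Monotone (deriv (phiH δ)) := by
    have : deriv (phiH δ) = fun t => -(min (max ((1-t)/δ) 0) 1) :=
      funext fun t => (phiH_hasDeriv hδ t).deriv
    rw [this]
    exact phiH_deriv_mono hδ
  exact hmono.convexOn_univ_of_deriv hdiff

end PhiH


set_option maxHeartbeats 2000000 in
/-- for the B-HSVM objective `F = f + g` on `ℝ^{p+1}`
(`u = (b; w)` with `b = u 0`, `w_j = u j.succ`), the regularizer `g` is
strongly convex with modulus `min(λ₂, λ₃)`, `F` has a unique minimizer `u*`,
and any PG sequence with extrapolation weights `ω_{k-1} ≤ √(L_{k-1}/L_k)`,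
step constants `0 < L_k ≤ L_f`, the descent condition, and nonincreasing
objective values converges R-linearly to `u*`.  (`u^{-1} = u^0` is realized
by truncated subtraction.) -/
theorem bhsvm_pg_R_linear_convergence (n p : ℕ) (hn : 0 < n) (δ : ℝ) (hδ : 0 < δ)
    (x : Fin n → EuclideanSpace ℝ (Fin p)) (y : Fin n → ℝ)
    (hy : ∀ i, y i = 1 ∨ y i = -1)
    (lam₁ lam₂ lam₃ : ℝ) (hlam₁ : 0 ≤ lam₁) (hlam₂ : 0 < lam₂) (hlam₃ : 0 < lam₃)
    (f g : EuclideanSpace ℝ (Fin (p + 1)) → ℝ)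
    (hf : ∀ u, f u =
      (1 / (n : ℝ)) * ∑ i, phiH δ (y i * (u 0 + ∑ j : Fin p, x i j * u j.succ)))
    (hg : ∀ u, g u = lam₁ * ∑ j : Fin p, |u j.succ| +
      lam₂ / 2 * ∑ j : Fin p, (u j.succ) ^ 2 + lam₃ / 2 * (u 0) ^ 2)
    (Lf : ℝ) (hLf : Lf = (1 / ((n : ℝ) * δ)) * ∑ i, (y i) ^ 2 * (1 + ‖x i‖ ^ 2))
    (gradf : EuclideanSpace ℝ (Fin (p + 1)) → EuclideanSpace ℝ (Fin (p + 1)))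
    (hgradf : ∀ u, HasGradientAt f (gradf u) u)
    (u uhat : ℕ → EuclideanSpace ℝ (Fin (p + 1)))
    (Lk : ℕ → ℝ) (ω : ℕ → ℝ)
    (hLk : ∀ k, 0 < Lk k ∧ Lk k ≤ Lf)
    (hω : ∀ k : ℕ, 1 ≤ k → 0 ≤ ω (k - 1) ∧ ω (k - 1) ≤ Real.sqrt (Lk (k - 1) / Lk k))
    (huhat : ∀ k : ℕ, 1 ≤ k →
      uhat (k - 1) = u (k - 1) + ω (k - 1) • (u (k - 1) - u (k - 2)))
    (hmin : ∀ k : ℕ, 1 ≤ k → ∀ v : EuclideanSpace ℝ (Fin (p + 1)),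
      f (uhat (k - 1)) + ⟪gradf (uhat (k - 1)), u k - uhat (k - 1)⟫ +
          Lk k / 2 * ‖u k - uhat (k - 1)‖ ^ 2 + g (u k) ≤
        f (uhat (k - 1)) + ⟪gradf (uhat (k - 1)), v - uhat (k - 1)⟫ +
          Lk k / 2 * ‖v - uhat (k - 1)‖ ^ 2 + g v)
    (hdesc : ∀ k : ℕ, 1 ≤ k →
      f (u k) ≤ f (uhat (k - 1)) + ⟪gradf (uhat (k - 1)), u k - uhat (k - 1)⟫ +
        Lk k / 2 * ‖u k - uhat (k - 1)‖ ^ 2)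
    (hmono : ∀ k : ℕ, 1 ≤ k → f (u k) + g (u k) ≤ f (u (k - 1)) + g (u (k - 1))) :
    -- `g` is strongly convex with modulus `min(λ₂, λ₃)`
    (∀ u' v gv, gv ∈ SubderivAt g v →
      g u' - g v ≥ ⟪gv, u' - v⟫ + (min lam₂ lam₃) / 2 * ‖u' - v‖ ^ 2) ∧
    -- `F = f + g` has a unique minimizer `u*`, and `u^k → u*` R-linearly
    ∃ ustar : EuclideanSpace ℝ (Fin (p + 1)),
      (∀ v, f ustar + g ustar ≤ f v + g v) ∧
      (∀ v, (∀ v', f v + g v ≤ f v' + g v') → v = ustar) ∧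
      ∃ C > 0, ∃ τ : ℝ, 0 < τ ∧ τ < 1 ∧ ∀ k : ℕ, ‖u k - ustar‖ ≤ C * τ ^ k := by
  classical
  set μ : ℝ := min lam₂ lam₃ with hμdef
  have hμ : 0 < μ := lt_min hlam₂ hlam₃
  have hμ₂ : μ ≤ lam₂ := min_le_left _ _
  have hμ₃ : μ ≤ lam₃ := min_le_right _ _
  have hLf0 : 0 < Lf := lt_of_lt_of_le (hLk 0).1 (hLk 0).2
  -- norm identity on coordinates
  have hnorm : ∀ w : EuclideanSpace ℝ (Fin (p+1)),
      ‖w‖^2 = (w 0)^2 + ∑ j : Fin p, (w j.succ)^2 := by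
    intro w
    rw [EuclideanSpace.norm_eq, Real.sq_sqrt (by positivity)]
    simp [Real.norm_eq_abs, sq_abs, Fin.sum_univ_succ]
  -- decomposition of g
  set cg : EuclideanSpace ℝ (Fin (p+1)) → ℝ := fun z =>
    lam₁ * ∑ j : Fin p, |z j.succ| + (lam₂-μ)/2 * ∑ j : Fin p, (z j.succ)^2
      + (lam₃-μ)/2*(z 0)^2 with hcgdef
  have hgdecomp : ∀ z, g z = cg z + μ/2*‖z‖^2 := by
    intro z
    rw [hg, hcgdef, hnorm z]
    ring
  -- coordinate convexity
  have hcoordabs : ∀ i : Fin (p+1),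
      ConvexOn ℝ Set.univ (fun w : EuclideanSpace ℝ (Fin (p+1)) => |w i|) := by
    intro i
    have h := (convexOn_univ_norm (E := ℝ)).comp_affineMap
      ((EuclideanSpace.proj i).toLinearMap.toAffineMap)
    simpa [Real.norm_eq_abs, Function.comp_def] using h
  have hcoordsq : ∀ i : Fin (p+1),
      ConvexOn ℝ Set.univ (fun w : EuclideanSpace ℝ (Fin (p+1)) => (w i)^2) := by
    intro i
    have h := (Even.convexOn_pow (even_two) (𝕜 := ℝ)).comp_affineMap
      ((EuclideanSpace.proj i).toLinearMap.toAffineMap)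
    simpa [Function.comp_def] using h
  have hcg : ConvexOn ℝ Set.univ cg := by
    have h1 : ConvexOn ℝ Set.univ
        (fun z : EuclideanSpace ℝ (Fin (p+1)) => lam₁ * ∑ j : Fin p, |z j.succ|) := by
      have := (aux_convexOn_sum Finset.univ
        (fun (j : Fin p) (z : EuclideanSpace ℝ (Fin (p+1))) => |z j.succ|)
        (fun j _ => hcoordabs j.succ)).smul hlam₁
      simpa [smul_eq_mul, Finset.mul_sum] using this
    have h2 : ConvexOn ℝ Set.univ
        (fun z : EuclideanSpace ℝ (Fin (p+1)) => (lam₂-μ)/2 * ∑ j : Fin p, (z j.succ)^2) := by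
      have := (aux_convexOn_sum Finset.univ
        (fun (j : Fin p) (z : EuclideanSpace ℝ (Fin (p+1))) => (z j.succ)^2)
        (fun j _ => hcoordsq j.succ)).smul (by linarith : (0:ℝ) ≤ (lam₂-μ)/2)
      simpa [smul_eq_mul, Finset.mul_sum] using this
    have h3 : ConvexOn ℝ Set.univ
        (fun z : EuclideanSpace ℝ (Fin (p+1)) => (lam₃-μ)/2 * (z 0)^2) := by
      have := (hcoordsq 0).smul (by linarith : (0:ℝ) ≤ (lam₃-μ)/2)
      simpa [smul_eq_mul] using this
    exact (h1.add h2).add h3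
  -- convexity of f
  have hfconv : ConvexOn ℝ Set.univ f := by
    have hrw : f = fun w => (1/(n:ℝ)) •
        (∑ i : Fin n, phiH δ (y i * (w 0 + ∑ j : Fin p, x i j * w j.succ))) := by
      funext w; rw [hf w]; simp [smul_eq_mul]
    rw [hrw]
    apply ConvexOn.smul (by positivity)
    apply aux_convexOn_sum
    intro i _
    set Lmap : EuclideanSpace ℝ (Fin (p+1)) →ₗ[ℝ] ℝ :=
      y i • ((EuclideanSpace.proj (0 : Fin (p+1))).toLinearMap
        + ∑ j : Fin p, x i j • (EuclideanSpace.proj (j.succ : Fin (p+1))).toLinearMap)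
      with hLmap
    have happ : ∀ w, Lmap w = y i * (w 0 + ∑ j : Fin p, x i j * w j.succ) := by
      intro w
      simp [hLmap, LinearMap.sum_apply, LinearMap.smul_apply, smul_eq_mul]
      ring
    have h := (phiH_convex hδ).comp_affineMap Lmap.toAffineMap
    have hpre : (Lmap.toAffineMap ⁻¹' Set.univ) = Set.univ := Set.preimage_univ
    rw [hpre] at h
    have heq : (phiH δ ∘ Lmap.toAffineMap)
        = fun w => phiH δ (y i * (w 0 + ∑ j : Fin p, x i j * w j.succ)) := by
      funext w
      simp [Function.comp, happ w]
    rw [heq] at h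
    exact h
  -- the objective
  set F : EuclideanSpace ℝ (Fin (p+1)) → ℝ := fun z => f z + g z with hFdef
  have hFdecomp : ∀ z, F z = (f z + cg z) + μ/2*‖z‖^2 := by
    intro z; rw [hFdef]; dsimp only; rw [hgdecomp z]; ring
  have hFc : ConvexOn ℝ Set.univ (fun z => f z + cg z) := hfconv.add hcg
  -- part 1 : strong convexity of g
  have part1 : ∀ u' v gv, gv ∈ SubderivAt g v →
      g u' - g v ≥ ⟪gv, u' - v⟫ + μ / 2 * ‖u' - v‖ ^ 2 := by
    intro u' v gv hgv
    have h := aux_subgrad_strong cg hcg μ hμ.le g hgdecomp v gv hgv u'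
    calc g u' - g v ≥ ⟪gv, u' - v⟫ + μ/2*‖u'-v‖^2 := h
      _ = ⟪gv, u' - v⟫ + μ/2*‖u'-v‖^2 := rfl
  -- continuity of F
  have hfcont : Continuous f := by
    have hdf : Differentiable ℝ f := fun z => ((hgradf z).hasFDerivAt).differentiableAt
    exact hdf.continuous
  have hcoordc : ∀ i : Fin (p+1),
      Continuous (fun w : EuclideanSpace ℝ (Fin (p+1)) => w i) :=
    fun i => (EuclideanSpace.proj i).continuous
  have hgcont : Continuous g := by
    have hgeq : g = fun w => lam₁ * ∑ j : Fin p, |w j.succ| +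
        lam₂ / 2 * ∑ j : Fin p, (w j.succ) ^ 2 + lam₃ / 2 * (w 0) ^ 2 := funext hg
    rw [hgeq]
    apply Continuous.add
    apply Continuous.add
    · exact continuous_const.mul (continuous_finset_sum _ fun j _ => (hcoordc j.succ).abs)
    · exact continuous_const.mul (continuous_finset_sum _ fun j _ => (hcoordc j.succ).pow 2)
    · exact continuous_const.mul ((hcoordc 0).pow 2)
  have hFcont : Continuous F := hfcont.add hgcont
  -- coercivity
  have hFlb : ∀ v, μ/2*‖v‖^2 ≤ F v := by
    intro v
    have hf0 : 0 ≤ f v := by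
      rw [hf v]
      exact mul_nonneg (by positivity) (Finset.sum_nonneg fun i _ => phiH_nonneg hδ _)
    have hcg0 : 0 ≤ cg v := by
      rw [hcgdef]
      have t1 : 0 ≤ lam₁ * ∑ j : Fin p, |v j.succ| :=
        mul_nonneg hlam₁ (Finset.sum_nonneg fun j _ => abs_nonneg _)
      have t2 : 0 ≤ (lam₂-μ)/2 * ∑ j : Fin p, (v j.succ)^2 :=
        mul_nonneg (by linarith) (Finset.sum_nonneg fun j _ => sq_nonneg _)
      have t3 : 0 ≤ (lam₃-μ)/2 * (v 0)^2 := mul_nonneg (by linarith) (sq_nonneg _)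
      dsimp only
      linarith
    rw [hFdecomp v]
    clear_value F cg μ
    linarith
  have htend : Tendsto F (cocompact (EuclideanSpace ℝ (Fin (p+1)))) atTop := by
    have h1 : Tendsto (fun r : ℝ => μ/2*r^2) atTop atTop := by
      apply Tendsto.const_mul_atTop (by positivity : (0:ℝ) < μ/2)
      exact tendsto_pow_atTop two_ne_zero
    have h2 : Tendsto (fun v : EuclideanSpace ℝ (Fin (p+1)) => μ/2*‖v‖^2)
        (cocompact _) atTop := h1.comp tendsto_norm_cocompact_atTop
    exact tendsto_atTop_mono hFlb h2
  obtain ⟨ustar, hustar⟩ := hFcont.exists_forall_le htend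
  have hFstrong : ∀ v, F ustar + μ/2*‖v-ustar‖^2 ≤ F v :=
    fun v => aux_min_strong _ hFc μ hμ.le F hFdecomp ustar hustar v
  refine ⟨part1, ustar, hustar, ?_, ?_⟩
  · -- uniqueness
    intro v hv
    have h1 := hFstrong v
    have h2 : F v ≤ F ustar := hv ustar
    have h3 : ‖v - ustar‖^2 ≤ 0 := by
      by_contra hcon
      push_neg at hcon
      have := mul_pos (by positivity : (0:ℝ) < μ/2) hcon
      clear_value F cg μ
      linarith
    have h4 : v - ustar = 0 := by
      have := sq_nonneg ‖v - ustar‖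
      have h5 : ‖v - ustar‖^2 = 0 := le_antisymm h3 this
      have h6 : ‖v - ustar‖ = 0 := by
        nlinarith [norm_nonneg (v - ustar)]
      exact norm_eq_zero.1 h6
    exact sub_eq_zero.1 h4
  clear_value F cg μ
  -- master inequality
  have keyA : ∀ (m : ℕ) (v : EuclideanSpace ℝ (Fin (p+1))),
      F (u (m+1)) + (Lk (m+1)+μ)/2 * ‖v - u (m+1)‖^2 ≤ F v + Lk (m+1)/2 * ‖v - uhat m‖^2 := by
    intro m v
    have hL0 : 0 < Lk (m+1) := (hLk (m+1)).1
    set L : ℝ := Lk (m+1) with hLdef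
    clear_value L
    set w : EuclideanSpace ℝ (Fin (p+1)) := uhat m with hwdef
    clear_value w
    set ψ : EuclideanSpace ℝ (Fin (p+1)) → ℝ :=
      fun z => f w + ⟪gradf w, z - w⟫ + L/2*‖z - w‖^2 + g z with hψdef
    have hψmin : ∀ z, ψ (u (m+1)) ≤ ψ z := by
      intro z
      have h := hmin (m+1) (by omega) z
      rw [show m+1-1 = m from rfl, ← hwdef, ← hLdef] at h
      simp only [hψdef]
      exact h
    set cψ : EuclideanSpace ℝ (Fin (p+1)) → ℝ := fun z => ψ z - (L+μ)/2*‖z‖^2 with hcψdef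
    have hψdecomp : ∀ z, ψ z = cψ z + (L+μ)/2*‖z‖^2 := by
      intro z; rw [hcψdef]; ring
    have hcψ : ConvexOn ℝ Set.univ cψ := by
      have h1 : ConvexOn ℝ Set.univ (fun z : EuclideanSpace ℝ (Fin (p+1)) =>
          cg z + (⟪gradf w - L•w, z⟫ + (f w - ⟪gradf w, w⟫ + L/2*‖w‖^2))) :=
        hcg.add (aux_affine_convex _ _)
      have heq : cψ = fun z : EuclideanSpace ℝ (Fin (p+1)) =>
          cg z + (⟪gradf w - L•w, z⟫ + (f w - ⟪gradf w, w⟫ + L/2*‖w‖^2)) := by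
        funext z
        rw [hcψdef]
        dsimp only
        rw [hψdef]
        dsimp only
        rw [hgdecomp z, inner_sub_right, inner_sub_left, real_inner_smul_left,
          norm_sub_sq_real, real_inner_comm z w]
        ring
      rw [heq]
      exact h1
    have hstrong := aux_min_strong cψ hcψ (L+μ) (by positivity) ψ hψdecomp
      (u (m+1)) hψmin v
    have hd : F (u (m+1)) ≤ ψ (u (m+1)) := by
      have h := hdesc (m+1) (by omega)
      rw [show m+1-1 = m from rfl, ← hwdef, ← hLdef] at h
      have hF1 : F (u (m+1)) = f (u (m+1)) + g (u (m+1)) := by rw [hFdef]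
      simp only [hψdef]
      rw [hF1]
      linarith
    have hup : ψ v ≤ F v + L/2*‖v - w‖^2 := by
      have h := aux_grad_convex_ineq f hfconv w v (gradf w) (hgradf w)
      have hF1 : F v = f v + g v := by rw [hFdef]
      simp only [hψdef]
      rw [hF1]
      linarith
    clear_value ψ cψ
    linarith
  -- parameters
  set t : ℝ := μ/(μ+4*Lf) with htdef
  have ht0 : 0 < t := by rw [htdef]; exact div_pos hμ (by linarith)
  have htkey : t*(μ+4*Lf) = μ := by
    rw [htdef, div_mul_cancel₀]
    exact ne_of_gt (by linarith)
  clear_value t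
  have ht1 : t < 1 := by nlinarith
  have hμt : μ*(1-t) = 4*Lf*t := by linear_combination -htkey
  set r2 : ℝ := (Lf + μ/2)/(Lf + μ) with hr2def
  have hr2key : r2*(Lf+μ) = Lf + μ/2 := by
    rw [hr2def, div_mul_cancel₀]
    exact ne_of_gt (by linarith)
  clear_value r2
  set ρ : ℝ := max (1-t^2) r2 with hρdef
  have hρa : 1-t^2 ≤ ρ := le_max_left _ _
  have hρb : r2 ≤ ρ := le_max_right _ _
  have hρ1 : ρ < 1 := by
    rw [hρdef]
    apply max_lt (by nlinarith)
    have hpos : (0:ℝ) < Lf + μ := by linarith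
    nlinarith [hr2key]
  clear_value ρ
  have hρ0 : 0 < ρ := lt_of_lt_of_le (by nlinarith) hρa
  have htkey2 : (1+t)*(2*Lf) = (1-t)*(2*Lf+μ) := by linear_combination htkey
  have hcoef : ∀ Lm : ℝ, 0 < Lm → Lm ≤ Lf → (1+t)*Lm ≤ ρ*((1-t)*(Lm+μ)) := by
    intro Lm h0 hle
    have h2 : (0:ℝ) < (1-t)*(Lm+μ) := mul_pos (by linarith) (by linarith)
    have h3 : r2*((1-t)*(Lm+μ)) ≤ ρ*((1-t)*(Lm+μ)) := mul_le_mul_of_nonneg_right hρb h2.le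
    have h4 : (1+t)*Lm ≤ r2*((1-t)*(Lm+μ)) := by
      have hpos : (0:ℝ) < (Lf+μ)*(2*Lf) := by positivity
      rw [← mul_le_mul_iff_of_pos_right hpos]
      have e1 : r2*((1-t)*(Lm+μ))*((Lf+μ)*(2*Lf)) = (Lf+μ/2)*((1-t)*(Lm+μ))*(2*Lf) := by
        linear_combination ((1-t)*(Lm+μ)*(2*Lf)) * hr2key
      have e2 : (1+t)*Lm*((Lf+μ)*(2*Lf)) = (1-t)*(2*Lf+μ)*(Lm*(Lf+μ)) := by
        linear_combination (Lm*(Lf+μ))*htkey2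
      rw [e1, e2]
      nlinarith [mul_nonneg (mul_nonneg (mul_nonneg
        (by linarith : (0:ℝ) ≤ 1-t) (by linarith : (0:ℝ) ≤ 2*Lf+μ)) hμ.le)
        (by linarith : (0:ℝ) ≤ Lf - Lm)]
    linarith
  have hLt : Lf*t^2 ≤ μ*t*(1-t)/2 := by
    have he : μ*t*(1-t)/2 = 2*Lf*t^2 := by linear_combination (t/2)*hμt
    nlinarith [mul_nonneg (mul_nonneg hLf0.le ht0.le) ht0.le]
  -- sequences
  set S : ℕ → ℝ := fun m => ‖u m - u (m-1)‖ with hSdef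
  set EE : ℕ → ℝ := fun m => F (u m) - F ustar with hEEdef
  set Φ : ℕ → ℝ := fun m => EE m + (1-t)*(Lk m + μ)/2 * S m^2 with hΦdef
  clear_value S EE Φ
  have hS0 : S 0 = 0 := by rw [hSdef]; simp
  have hSnn : ∀ m, 0 ≤ S m := by intro m; rw [hSdef]; exact norm_nonneg _
  have hSsucc : ∀ m, S (m+1) = ‖u m - u (m+1)‖ := by
    intro m; rw [hSdef]; dsimp only; rw [show m+1-1 = m from rfl, norm_sub_rev]
  have hEnn : ∀ m, 0 ≤ EE m := by
    intro m; rw [hEEdef]; dsimp only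
    linarith [hustar (u m)]
  have hΦ0 : Φ 0 = EE 0 := by rw [hΦdef]; dsimp only; rw [hS0]; ring
  have hΦge : ∀ m, EE m ≤ Φ m := by
    intro m; rw [hΦdef]; dsimp only
    have h1 : 0 ≤ (1-t)*(Lk m + μ)/2 * S m^2 := by
      apply mul_nonneg
      apply div_nonneg _ (by norm_num)
      apply mul_nonneg (by linarith)
      linarith [(hLk m).1]
      exact sq_nonneg _
    linarith
  -- step facts
  have huhat' : ∀ m, uhat m = u m + ω m • (u m - u (m-1)) := by
    intro m
    have h := huhat (m+1) (by omega)
    rw [show m+1-1 = m from rfl, show m+1-2 = m-1 from by omega] at h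
    exact h
  have hω' : ∀ m, 0 ≤ ω m ∧ ω m ≤ Real.sqrt (Lk m / Lk (m+1)) := by
    intro m
    have h := hω (m+1) (by omega)
    rwa [show m+1-1 = m from rfl] at h
  have hωsq : ∀ m, Lk (m+1) * (ω m)^2 ≤ Lk m := by
    intro m
    have h1 := (hω' m).2
    have h0 := (hω' m).1
    have hsq : (ω m)^2 ≤ Lk m / Lk (m+1) := by
      have hs := Real.sq_sqrt (div_nonneg (hLk m).1.le (hLk (m+1)).1.le)
      nlinarith [Real.sqrt_nonneg (Lk m / Lk (m+1))]
    rw [le_div_iff₀ (hLk (m+1)).1] at hsq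
    linarith [hsq]
  have hnuw : ∀ m, ‖u m - uhat m‖ = ω m * S m := by
    intro m
    rw [huhat' m]
    have he : u m - (u m + ω m • (u m - u (m-1))) = -(ω m • (u m - u (m-1))) := by
      abel
    rw [he, norm_neg, norm_smul, Real.norm_eq_abs, abs_of_nonneg (hω' m).1, hSdef]
  -- (★★)
  have hstar2 : ∀ m, EE (m+1) + (Lk (m+1)+μ)/2 * S (m+1)^2 ≤ EE m + Lk m/2 * S m^2 := by
    intro m
    have hA := keyA m (u m)
    rw [hnuw m] at hA
    have h2 : Lk (m+1)/2 * (ω m * S m)^2 ≤ Lk m /2 * S m^2 := by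
      have := hωsq m
      nlinarith [sq_nonneg (S m)]
    rw [hEEdef]
    dsimp only
    rw [hSsucc m]
    nlinarith [hA, h2]
  -- (★)
  have hstar1 : ∀ m, EE (m+1) ≤ (1-t)*EE m + Lk m * S m^2 := by
    intro m
    set v : EuclideanSpace ℝ (Fin (p+1)) := (1-t) • u m + t • ustar with hvdef
    clear_value v
    have hA := keyA m v
    have hFv : F v ≤ (1-t)*F (u m) + t*F ustar - μ*t*(1-t)/2*‖u m - ustar‖^2 := by
      rw [hvdef]
      exact aux_strong_combo _ hFc μ hμ.le F hFdecomp (u m) ustar t ht0.le ht1.le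
    have hvw : ‖v - uhat m‖ ≤ t*‖u m - ustar‖ + ω m * S m := by
      rw [huhat' m, hvdef]
      have he : (1-t) • u m + t • ustar - (u m + ω m • (u m - u (m-1)))
          = t • (ustar - u m) - ω m • (u m - u (m-1)) := by
        rw [smul_sub, smul_sub, sub_smul, one_smul]
        abel
      rw [he]
      refine (norm_sub_le _ _).trans ?_
      rw [norm_smul, norm_smul, Real.norm_eq_abs, Real.norm_eq_abs,
        abs_of_nonneg ht0.le, abs_of_nonneg (hω' m).1, norm_sub_rev ustar, hSdef]
    have hvw2 : ‖v - uhat m‖^2 ≤ 2*t^2*‖u m - ustar‖^2 + 2*(ω m)^2 * S m^2 := by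
      have h := pow_le_pow_left₀ (norm_nonneg _) hvw 2
      nlinarith [sq_nonneg (t*‖u m - ustar‖ - ω m * S m)]
    have hLle : Lk (m+1) ≤ Lf := (hLk (m+1)).2
    have hL0 : 0 < Lk (m+1) := (hLk (m+1)).1
    have hterm : Lk (m+1)/2 * ‖v - uhat m‖^2 ≤
        μ*t*(1-t)/2*‖u m - ustar‖^2 + Lk m * S m^2 := by
      have h1 : Lk (m+1)/2 * ‖v - uhat m‖^2 ≤
          Lk (m+1)*t^2*‖u m - ustar‖^2 + Lk (m+1)*(ω m)^2 * S m^2 := by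
        nlinarith [hvw2, hL0]
      have h2 : Lk (m+1)*t^2*‖u m - ustar‖^2 ≤ μ*t*(1-t)/2*‖u m - ustar‖^2 := by
        have : Lk (m+1)*t^2 ≤ μ*t*(1-t)/2 := by
          nlinarith [sq_nonneg t]
        nlinarith [sq_nonneg ‖u m - ustar‖]
      have h3 : Lk (m+1)*(ω m)^2 * S m^2 ≤ Lk m * S m^2 := by
        nlinarith [hωsq m, sq_nonneg (S m)]
      linarith
    have hquad : 0 ≤ (Lk (m+1)+μ)/2 * ‖v - u (m+1)‖^2 := by
      apply mul_nonneg _ (sq_nonneg _)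
      apply div_nonneg _ (by norm_num)
      linarith
    rw [hEEdef]
    dsimp only
    linarith [hA, hFv, hterm, hquad]
  -- contraction
  have hstep : ∀ m, Φ (m+1) ≤ ρ * Φ m := by
    intro m
    have h1 := hstar1 m
    have h2 := hstar2 m
    have h3 := hcoef (Lk m) (hLk m).1 (hLk m).2
    have h5 := hEnn m
    have h6 := sq_nonneg (S m)
    have hA := mul_le_mul_of_nonneg_left h1 ht0.le
    have hB := mul_le_mul_of_nonneg_left h2 (by linarith : (0:ℝ) ≤ 1-t)
    have hC := mul_le_mul_of_nonneg_right h3 h6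
    have hD := mul_le_mul_of_nonneg_right hρa h5
    rw [hΦdef]
    dsimp only
    nlinarith [hA, hB, hC, hD]
  have hΦdecay : ∀ m, Φ m ≤ ρ^m * Φ 0 := by
    intro m
    induction m with
    | zero => simp
    | succ k ih =>
      calc Φ (k+1) ≤ ρ * Φ k := hstep k
        _ ≤ ρ * (ρ^k * Φ 0) := mul_le_mul_of_nonneg_left ih hρ0.le
        _ = ρ^(k+1) * Φ 0 := by ring
  -- conclusion
  refine ⟨Real.sqrt (2*EE 0/μ) + 1, by positivity, Real.sqrt ρ,
    Real.sqrt_pos.2 hρ0, ?_, ?_⟩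
  · rw [show (1:ℝ) = Real.sqrt 1 from Real.sqrt_one.symm]
    exact Real.sqrt_lt_sqrt hρ0.le hρ1
  · intro k
    have h1 : μ/2 * ‖u k - ustar‖^2 ≤ EE k := by
      have := hFstrong (u k)
      rw [hEEdef]
      dsimp only
      linarith
    have h2 : EE k ≤ ρ^k * EE 0 := by
      calc EE k ≤ Φ k := hΦge k
        _ ≤ ρ^k * Φ 0 := hΦdecay k
        _ = ρ^k * EE 0 := by rw [hΦ0]
    have hD2 : ‖u k - ustar‖^2 ≤ 2*EE 0/μ * ρ^k := by
      rw [div_mul_eq_mul_div, le_div_iff₀ hμ]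
      nlinarith [pow_nonneg hρ0.le k]
    have hsq : ‖u k - ustar‖ ≤ Real.sqrt (2*EE 0/μ) * Real.sqrt ρ ^ k := by
      have h3 : ‖u k - ustar‖ = Real.sqrt (‖u k - ustar‖^2) :=
        (Real.sqrt_sq (norm_nonneg _)).symm
      rw [h3]
      refine (Real.sqrt_le_sqrt hD2).trans_eq ?_
      rw [Real.sqrt_mul (div_nonneg (by linarith [hEnn 0]) hμ.le)]
      congr 1
      rw [show ρ^k = ((Real.sqrt ρ)^k)^2 from by
        rw [← pow_mul, mul_comm, pow_mul, Real.sq_sqrt hρ0.le]]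
      exact Real.sqrt_sq (pow_nonneg (Real.sqrt_nonneg _) _)
    refine hsq.trans ?_
    apply mul_le_mul_of_nonneg_right _ (pow_nonneg (Real.sqrt_nonneg _) k)
    linarith
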